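/- For every integer l coprime to N and every integer k: Δ(σ^l) = Δ(σ), and P_{σ^l, σ^{lk}}(τ) = P_{σ, σ^k}(τ) for all τ with Im τ > 0. -/

import Mathlib

open TensorProduct

/-- Complexification of a lattice automorphism: the base change to `ℂ ⊗[ℤ] Q`. -/
noncomputable def bch {Q : Type*} [AddCommGroup Q] (σ : Q ≃ₗ[ℤ] Q) :
    Module.End ℂ (ℂ ⊗[ℤ] Q) :=
  LinearMap.baseChange ℂ σ.toLinearMap

/-- `dim_ℂ h^ρ_{j/N}`, the dimension of the eigenspace of `ρ` with eigenvalue `e^{-2πij/N}`. -/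
noncomputable def eigDimN {Q : Type*} [AddCommGroup Q] (ρ : Q ≃ₗ[ℤ] Q) (N j : ℕ) : ℕ :=
  Module.finrank ℂ
    ↥(LinearMap.ker (bch ρ - Complex.exp (-(2 * Real.pi * Complex.I * (j : ℂ)) / (N : ℂ)) • 1))

/-- `Δ(ρ) = (1/4) ∑_{j=1}^{N-1} (j/N)(1 - j/N) dim h^ρ_{j/N}`. -/
noncomputable def deltaN {Q : Type*} [AddCommGroup Q] (ρ : Q ≃ₗ[ℤ] Q) (N : ℕ) : ℚ :=
  (1 / 4 : ℚ) * ∑ j ∈ Finset.Ico 1 N, ((j : ℚ) / N) * (1 - (j : ℚ) / N) * (eigDimN ρ N j : ℚ)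

/-- `P_{ρ,ρ^k}(τ) = e^{2πiτ(r/24 - Δ(ρ))} ∏_{m≥1} ∏_{j<N}
    (1 - e^{-2πijk/N} e^{2πiτ(m - j/N)})^{dim h^ρ_{j/N}}`. -/
noncomputable def Psik {Q : Type*} [AddCommGroup Q] (ρ : Q ≃ₗ[ℤ] Q) (N : ℕ) (k : ℤ)
    (τ : ℂ) : ℂ :=
  Complex.exp (2 * Real.pi * Complex.I * τ *
      ((Module.finrank ℂ (ℂ ⊗[ℤ] Q) : ℂ) / 24 - ((deltaN ρ N : ℚ) : ℂ))) *
    ∏' m : ℕ, ∏ j ∈ Finset.range N,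
      (1 - Complex.exp (-(2 * Real.pi * Complex.I * (j : ℂ) * (k : ℂ)) / (N : ℂ)) *
          Complex.exp (2 * Real.pi * Complex.I * τ * (((m : ℂ) + 1) - (j : ℂ) / (N : ℂ)))) ^
        eigDimN ρ N j


open Finset LinearMap

section PowVal
variable {M : Type*} [Monoid M] {N : ℕ} [NeZero N] {x : M}

omit [NeZero N] in
lemma pow_val_natCast' (hx : x ^ N = 1) (m : ℕ) : x ^ ((m : ZMod N)).val = x ^ m := by
  rw [ZMod.val_natCast, ← pow_eq_pow_mod _ hx]

omit [NeZero N] in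
lemma pow_val_mul' (hx : x ^ N = 1) (c d : ZMod N) :
    x ^ (c * d).val = (x ^ c.val) ^ d.val := by
  rw [ZMod.val_mul, ← pow_eq_pow_mod _ hx, pow_mul]

lemma pow_val_add' (hx : x ^ N = 1) (c d : ZMod N) :
    x ^ (c + d).val = x ^ c.val * x ^ d.val := by
  rw [ZMod.val_add, ← pow_eq_pow_mod _ hx, pow_add]

end PowVal

lemma finrank_ker_eq_trace_sum {V : Type*} [AddCommGroup V] [Module ℂ V]
    [FiniteDimensional ℂ V] {N : ℕ} [NeZero N] {ζ : ℂ} (hζ : ζ ^ N = 1)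
    {T : Module.End ℂ V} (hT : T ^ N = 1) (j : ℕ) :
    ((Module.finrank ℂ ↥(LinearMap.ker (T - ζ ^ j • 1)) : ℂ)) =
      (N : ℂ)⁻¹ * ∑ a : ZMod N, ζ ^ ((-(j : ZMod N)) * a).val *
        LinearMap.trace ℂ V (T ^ a.val) := by
  have hNne : (N : ℂ) ≠ 0 := Nat.cast_ne_zero.mpr (NeZero.ne N)
  set π : Module.End ℂ V :=
    (N : ℂ)⁻¹ • ∑ a : ZMod N, ζ ^ ((-(j : ZMod N)) * a).val • T ^ a.val with hπ
  have hζj : ζ ^ ((j : ZMod N)).val = ζ ^ j := pow_val_natCast' hζ j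
  have hT1 : T ^ ((1 : ZMod N)).val = T := by
    have : ((1 : ZMod N)) = ((1 : ℕ) : ZMod N) := by norm_cast
    rw [this, pow_val_natCast' hT, pow_one]
  have hkey : T * π = ζ ^ j • π := by
    rw [hπ, mul_smul_comm, Finset.mul_sum, smul_comm ((ζ:ℂ) ^ j) ((N:ℂ)⁻¹)]
    congr 1
    rw [Finset.smul_sum]
    refine Fintype.sum_equiv (Equiv.addRight (1 : ZMod N))
      (fun a => T * ζ ^ ((-(j : ZMod N)) * a).val • T ^ a.val)
      (fun b => ζ ^ j • ζ ^ ((-(j : ZMod N)) * b).val • T ^ b.val) (fun a => ?_)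
    simp only [Equiv.coe_addRight]
    have h1 : ζ ^ ((-(j : ZMod N)) * a).val
        = ζ ^ j * ζ ^ ((-(j : ZMod N)) * (a + 1)).val := by
      have h : (-(j : ZMod N)) * a = (-(j : ZMod N)) * (a + 1) + (j : ZMod N) := by ring
      rw [h, pow_val_add' hζ, hζj, mul_comm]
    have h2 : T ^ (a + 1).val = T ^ (a.val + 1) := by
      rw [pow_val_add' hT, hT1, pow_succ]
    rw [mul_smul_comm, ← pow_succ', h2, h1, smul_smul]
  -- membership
  have hmem : ∀ x, π x ∈ LinearMap.ker (T - ζ ^ j • 1) := by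
    intro x
    rw [LinearMap.mem_ker]
    have h := DFunLike.congr_fun hkey x
    simp only [Module.End.mul_apply, LinearMap.smul_apply] at h
    simp only [LinearMap.sub_apply, LinearMap.smul_apply, Module.End.one_apply]
    rw [h, sub_self]
  -- fixes the kernel
  have hfix : ∀ x ∈ LinearMap.ker (T - ζ ^ j • 1), π x = x := by
    intro x hx
    rw [LinearMap.mem_ker] at hx
    simp only [LinearMap.sub_apply, LinearMap.smul_apply, Module.End.one_apply,
      sub_eq_zero] at hx
    have hpow : ∀ m : ℕ, (T ^ m) x = (ζ ^ j) ^ m • x := by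
      intro m
      induction m with
      | zero => simp
      | succ n ih =>
        rw [pow_succ', Module.End.mul_apply, ih, map_smul, hx, smul_smul, ← pow_succ]
    have hcoef : ∀ a : ZMod N,
        ζ ^ ((-(j : ZMod N)) * a).val * (ζ ^ j) ^ a.val = 1 := by
      intro a
      have h3 : (ζ ^ j) ^ a.val = ζ ^ (((j : ZMod N)) * a).val := by
        rw [pow_val_mul' hζ, hζj]
      rw [h3, ← pow_val_add' hζ, neg_mul, neg_add_cancel, ZMod.val_zero, pow_zero]
    rw [hπ]
    simp only [LinearMap.smul_apply, LinearMap.sum_apply]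
    have : ∀ a : ZMod N, ζ ^ ((-(j : ZMod N)) * a).val • (T ^ a.val) x = x := by
      intro a
      rw [hpow, smul_smul, hcoef, one_smul]
    rw [Finset.sum_congr rfl (fun a _ => this a)]
    rw [Finset.sum_const, Finset.card_univ, ZMod.card,
      ← Nat.cast_smul_eq_nsmul ℂ, smul_smul, inv_mul_cancel₀ hNne, one_smul]
  have hproj : LinearMap.IsProj (LinearMap.ker (T - ζ ^ j • 1)) π := ⟨hmem, hfix⟩
  have := hproj.trace
  rw [← this, hπ, map_smul, map_sum]
  simp only [map_smul, smul_eq_mul]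

set_option maxHeartbeats 1000000 in
open IntermediateField Polynomial in
lemma galois_invariance {N : ℕ} [NeZero N] {ζ : ℂ} (hζ : IsPrimitiveRoot ζ N)
    (t : ZMod N → ℤ)
    (hrat : ∀ i : ZMod N, ∃ q : ℚ, ∑ a : ZMod N, ζ ^ (i * a).val * (t a : ℂ) = (q : ℂ))
    (u : (ZMod N)ˣ) (i : ZMod N) :
    ∑ a : ZMod N, ζ ^ (((u : ZMod N) * i) * a).val * (t a : ℂ)
      = ∑ a : ZMod N, ζ ^ (i * a).val * (t a : ℂ) := by
  have hN : 0 < N := Nat.pos_of_ne_zero (NeZero.ne N)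
  have hζ1 : ζ ^ N = 1 := hζ.pow_eq_one
  have hint : IsIntegral ℚ ζ := ⟨X ^ N - C 1, monic_X_pow_sub_C 1 (NeZero.ne N), by
    simp [eval₂_sub, eval₂_pow, hζ1]⟩
  set g : ℚ⟮ζ⟯ := AdjoinSimple.gen ℚ ζ with hgdef
  have hg : algebraMap ℚ⟮ζ⟯ ℂ g = ζ := AdjoinSimple.algebraMap_gen ℚ ζ
  have hinj : Function.Injective (algebraMap ℚ⟮ζ⟯ ℂ) := (algebraMap ℚ⟮ζ⟯ ℂ).injective
  have hgN : g ^ N = 1 := by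
    apply hinj
    rw [map_pow, hg, map_one, hζ1]
  set m : ℕ := ((u : ZMod N)).val with hm
  have hmcop : Nat.Coprime m N := ZMod.val_coe_unit_coprime u
  have hζm : IsPrimitiveRoot (ζ ^ m) N := hζ.pow_of_coprime m hmcop
  set B := IntermediateField.adjoin.powerBasis hint with hB
  have hBgen : B.gen = g := IntermediateField.adjoin.powerBasis_gen hint
  have hroot : aeval (g ^ m) (minpoly ℚ B.gen) = 0 := by
    rw [hBgen, hgdef]
    erw [IntermediateField.minpoly_gen]
    apply hinj
    rw [map_zero, ← Polynomial.aeval_algebraMap_apply, map_pow, hg]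
    rw [← Polynomial.cyclotomic_eq_minpoly_rat hζ hN,
      Polynomial.cyclotomic_eq_minpoly_rat hζm hN]
    exact minpoly.aeval ℚ (ζ ^ m)
  set f : ℚ⟮ζ⟯ →ₐ[ℚ] ℚ⟮ζ⟯ := B.lift (g ^ m) hroot with hf
  have hfg : f g = g ^ m := by
    have := B.lift_gen (g ^ m) hroot
    rwa [hBgen] at this
  -- the sums inside K
  set S : ZMod N → ℚ⟮ζ⟯ := fun i' => ∑ a : ZMod N, (t a : ℚ⟮ζ⟯) * g ^ (i' * a).val
    with hS
  have claim1 : ∀ i' : ZMod N,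
      algebraMap ℚ⟮ζ⟯ ℂ (S i') = ∑ a : ZMod N, ζ ^ (i' * a).val * (t a : ℂ) := by
    intro i'
    rw [hS, map_sum]
    refine Finset.sum_congr rfl (fun a _ => ?_)
    rw [map_mul, map_pow, hg, map_intCast, mul_comm]
  have claim2 : f (S i) = S ((u : ZMod N) * i) := by
    rw [hS, map_sum]
    refine Finset.sum_congr rfl (fun a _ => ?_)
    rw [map_mul, map_intCast, map_pow, hfg]
    congr 1
    rw [← pow_mul, mul_assoc]
    rw [pow_val_mul' hgN ((u : ZMod N)) (i * a)]
    rw [← hm, pow_mul]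
  obtain ⟨q, hq⟩ := hrat i
  have claim3 : S i = (q : ℚ⟮ζ⟯) := by
    apply hinj
    rw [claim1, hq, map_ratCast]
  have claim4 : S ((u : ZMod N) * i) = S i := by
    rw [← claim2, claim3, map_ratCast]
  rw [← claim1, ← claim1, claim4]

lemma toLinearMap_pow' {Q : Type*} [AddCommGroup Q] (σ : Q ≃ₗ[ℤ] Q) (m : ℕ) :
    (σ ^ m).toLinearMap = σ.toLinearMap ^ m := by
  induction m with
  | zero => rfl
  | succ n ih => rw [pow_succ, pow_succ, ← ih]; rfl

lemma bch_pow {Q : Type*} [AddCommGroup Q] (σ : Q ≃ₗ[ℤ] Q) (m : ℕ) :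
    bch (σ ^ m) = (bch σ) ^ m := by
  unfold bch
  rw [toLinearMap_pow', LinearMap.baseChange_pow]

lemma eigDim_pow_eq {Q : Type*} [AddCommGroup Q] [Module.Free ℤ Q] [Module.Finite ℤ Q]
    {N : ℕ} (hN : 0 < N) {σ : Q ≃ₗ[ℤ] Q} (hσN : σ ^ N = 1)
    {l : ℕ} (hl : Nat.Coprime l N) (j : ℕ) :
    eigDimN (σ ^ l) N j = eigDimN σ N j := by
  haveI : NeZero N := ⟨hN.ne'⟩
  have hNne : (N : ℂ) ≠ 0 := Nat.cast_ne_zero.mpr hN.ne'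
  set ζ : ℂ := Complex.exp (-(2 * Real.pi * Complex.I) / N) with hζdef
  have hζprim : IsPrimitiveRoot ζ N := by
    have h := (Complex.isPrimitiveRoot_exp N hN.ne').inv
    rwa [← Complex.exp_neg, ← neg_div] at h
  have hζ1 : ζ ^ N = 1 := hζprim.pow_eq_one
  have heig : ∀ j' : ℕ,
      Complex.exp (-(2 * Real.pi * Complex.I * (j' : ℂ)) / (N : ℂ)) = ζ ^ j' := by
    intro j'
    rw [hζdef, ← Complex.exp_nat_mul]
    congr 1
    ring
  set S : Module.End ℂ (ℂ ⊗[ℤ] Q) := bch σ with hSdef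
  have hS1 : S ^ N = 1 := by
    rw [hSdef, ← bch_pow, hσN]
    unfold bch
    have : (1 : Q ≃ₗ[ℤ] Q).toLinearMap = LinearMap.id := rfl
    rw [this, LinearMap.baseChange_id]
    rfl
  -- traces
  set t : ZMod N → ℤ := fun a => LinearMap.trace ℤ Q ((σ ^ a.val).toLinearMap) with ht
  have htr : ∀ m : ℕ, LinearMap.trace ℂ _ (S ^ m) = ((t (m : ZMod N) : ℤ) : ℂ) := by
    intro m
    rw [hSdef, ← bch_pow]
    unfold bch
    rw [LinearMap.trace_baseChange]
    have hper : (σ ^ m) = σ ^ ((m : ZMod N)).val := by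
      rw [ZMod.val_natCast, ← pow_eq_pow_mod _ hσN]
    rw [hper, ht]
    simp [algebraMap_int_eq]
  -- dimension formula for σ
  have hdimσ : ∀ j' : ℕ, ((eigDimN σ N j' : ℂ)) =
      (N : ℂ)⁻¹ * ∑ a : ZMod N, ζ ^ ((-(j' : ZMod N)) * a).val * ((t a : ℤ) : ℂ) := by
    intro j'
    unfold eigDimN
    rw [heig j']
    rw [finrank_ker_eq_trace_sum hζ1 hS1 j']
    congr 1
    refine Finset.sum_congr rfl (fun a _ => ?_)
    rw [htr a.val]
    congr 2
    rw [ZMod.natCast_val, ZMod.cast_id]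
  -- dimension formula for σ ^ l
  set u : (ZMod N)ˣ := ZMod.unitOfCoprime l hl with hu
  have hucoe : ((u : ZMod N)) = (l : ZMod N) := ZMod.coe_unitOfCoprime l hl
  have hdimσl : ((eigDimN (σ ^ l) N j : ℂ)) =
      (N : ℂ)⁻¹ * ∑ a : ZMod N,
        ζ ^ (((-(j : ZMod N)) * (u⁻¹ : (ZMod N)ˣ)) * a).val * ((t a : ℤ) : ℂ) := by
    unfold eigDimN
    rw [heig j]
    have hSl : bch (σ ^ l) = S ^ l := bch_pow σ l
    have hSlN : (S ^ l) ^ N = 1 := by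
      rw [← pow_mul, mul_comm, pow_mul, hS1, one_pow]
    rw [hSl, finrank_ker_eq_trace_sum hζ1 hSlN j]
    congr 1
    have step1 : ∀ a : ZMod N,
        LinearMap.trace ℂ _ ((S ^ l) ^ a.val) = ((t ((l : ZMod N) * a) : ℤ) : ℂ) := by
      intro a
      rw [← pow_mul, htr (l * a.val)]
      congr 2
      push_cast
      rw [ZMod.natCast_val, ZMod.cast_id]
    rw [Finset.sum_congr rfl (fun a _ => by rw [step1 a])]
    -- reindex a = u⁻¹ • b
    refine Fintype.sum_equiv ⟨fun a => (u : ZMod N) * a, fun b => ((u⁻¹ : (ZMod N)ˣ) : ZMod N) * b,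
      fun a => by simp [← mul_assoc, ← Units.val_mul], fun b => by simp [← mul_assoc, ← Units.val_mul]⟩
      _ _ (fun a => ?_)
    simp only [Equiv.coe_fn_mk]
    have huu : ((u⁻¹ : (ZMod N)ˣ) : ZMod N) * (u : ZMod N) = 1 := by
      rw [← Units.val_mul, inv_mul_cancel, Units.val_one]
    have h1 : (-(j : ZMod N) * ((u⁻¹ : (ZMod N)ˣ) : ZMod N)) * ((u : ZMod N) * a)
        = -(j : ZMod N) * a := by
      rw [show (-(j : ZMod N) * ((u⁻¹ : (ZMod N)ˣ) : ZMod N)) * ((u : ZMod N) * a)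
        = (((u⁻¹ : (ZMod N)ˣ) : ZMod N) * (u : ZMod N)) * (-(j : ZMod N) * a) by ring,
        huu, one_mul]
    rw [h1, hucoe]
  -- rationality
  have hrat : ∀ i : ZMod N, ∃ q : ℚ,
      ∑ a : ZMod N, ζ ^ (i * a).val * ((t a : ℤ) : ℂ) = (q : ℂ) := by
    intro i
    refine ⟨(N : ℚ) * (eigDimN σ N (-i).val : ℚ), ?_⟩
    have h := hdimσ ((-i).val)
    have hi : (-(((-i).val : ℕ) : ZMod N)) = i := by
      rw [ZMod.natCast_val, ZMod.cast_id, neg_neg]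
    rw [hi] at h
    push_cast
    rw [h, ← mul_assoc, mul_inv_cancel₀ hNne, one_mul]
  -- put it together
  have key : ∑ a : ZMod N,
        ζ ^ (((-(j : ZMod N)) * (u⁻¹ : (ZMod N)ˣ)) * a).val * ((t a : ℤ) : ℂ)
      = ∑ a : ZMod N, ζ ^ ((-(j : ZMod N)) * a).val * ((t a : ℤ) : ℂ) := by
    have h := galois_invariance hζprim t hrat u ((-(j : ZMod N)) * (u⁻¹ : (ZMod N)ˣ))
    have harg : (u : ZMod N) * ((-(j : ZMod N)) * ((u⁻¹ : (ZMod N)ˣ) : ZMod N))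
        = (-(j : ZMod N)) := by
      rw [mul_comm ((u : ZMod N)), mul_assoc, ← Units.val_mul, inv_mul_cancel,
        Units.val_one, mul_one]
    rw [harg] at h
    exact h.symm
  have : ((eigDimN (σ ^ l) N j : ℂ)) = ((eigDimN σ N j : ℂ)) := by
    rw [hdimσl, key, ← hdimσ]
  exact_mod_cast this

theorem stmt_18 (Q : Type*) [AddCommGroup Q] [Module.Free ℤ Q] [Module.Finite ℤ Q]
    (N : ℕ) (hN : 0 < N)
    (σ : Q ≃ₗ[ℤ] Q) (hσN : σ ^ N = 1)
    (l : ℕ) (hl : Nat.Coprime l N) :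
    deltaN (σ ^ l) N = deltaN σ N ∧
    ∀ (k : ℤ) (τ : ℂ), 0 < τ.im → Psik (σ ^ l) N k τ = Psik σ N k τ := by
  have hdim : ∀ j : ℕ, eigDimN (σ ^ l) N j = eigDimN σ N j :=
    fun j => eigDim_pow_eq hN hσN hl j
  have hΔ : deltaN (σ ^ l) N = deltaN σ N := by
    unfold deltaN
    congr 1
    exact Finset.sum_congr rfl (fun j _ => by rw [hdim j])
  refine ⟨hΔ, fun k τ _ => ?_⟩
  unfold Psik
  rw [hΔ]
  congr 1
  exact tprod_congr (fun m => Finset.prod_congr rfl (fun j _ => by rw [hdim j]))
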